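/- arXiv:2502.03554 — 2 statements merged into one kernel-verified Lean document; each statement's English description precedes it below -/
import Mathlib

section
/- There exist constants c > 0 and ỹ > 0 such that for every real y > ỹ, |∫_{−∞}^{∞} |φ_x(iy) − iy|² dx − π/(4y)| < c/y³. -/
noncomputable def upperSqrt (w : ℂ) : ℂ :=
  if 0 < (w ^ (1/2 : ℂ)).im then w ^ (1/2 : ℂ) else -(w ^ (1/2 : ℂ))

noncomputable def slitMap (x : ℝ) (z : ℂ) : ℂ :=
  (x : ℂ) + upperSqrt ((z - (x : ℂ)) ^ 2 - 1)

open MeasureTheory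


lemma upperSqrt_sq {w : ℂ} (hw : w ≠ 0) : (upperSqrt w) ^ 2 = w := by
  have h : (w ^ (1/2 : ℂ)) ^ 2 = w := by
    rw [sq, ← Complex.cpow_add _ _ hw]
    norm_num
  unfold upperSqrt
  split_ifs <;> simp [h, neg_pow]

lemma im_upperSqrt_pos {w : ℂ} (h : w.im ≠ 0 ∨ w.re < 0) : 0 < (upperSqrt w).im := by
  have hw : w ≠ 0 := by
    intro h0; rcases h with h1 | h1 <;> simp [h0] at h1
  have hs2 : (w ^ (1/2 : ℂ)) ^ 2 = w := by
    rw [sq, ← Complex.cpow_add _ _ hw]; norm_num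
  unfold upperSqrt
  split_ifs with hpos
  · exact hpos
  · push_neg at hpos
    rcases lt_or_eq_of_le hpos with hlt | heq
    · simpa using neg_pos.mpr hlt
    · exfalso
      set s := w ^ (1/2 : ℂ) with hs
      have hkey : w = ((s.re ^ 2 : ℝ) : ℂ) := by
        rw [← hs2]
        apply Complex.ext <;> simp [sq, Complex.mul_re, Complex.mul_im, heq]
      rcases h with h1 | h1
      · rw [hkey] at h1; exact h1 (Complex.ofReal_im _)
      · rw [hkey, Complex.ofReal_re] at h1
        exact absurd h1 (not_lt.mpr (sq_nonneg s.re))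

lemma measurable_upperSqrt : Measurable upperSqrt := by
  have mpow : Measurable fun w : ℂ => w ^ (1/2 : ℂ) := by
    have h : (fun w : ℂ => w ^ (1/2 : ℂ)) =
        fun w => if w = 0 then 0 else Complex.exp (Complex.log w * (1/2)) := by
      funext w
      rw [Complex.cpow_def]
      split_ifs with h1 h2 <;> first | rfl | norm_num at h2
    rw [h]
    exact Measurable.ite (by simp [Set.setOf_eq_eq_singleton, MeasurableSet.singleton])
      measurable_const (Complex.measurable_exp.comp (Complex.measurable_log.mul_const _))
  unfold upperSqrt
  exact Measurable.ite (measurableSet_lt measurable_const (Complex.measurable_im.comp mpow))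
    mpow mpow.neg

lemma integrable_g {y : ℝ} (hy : 0 < y) : Integrable fun x : ℝ => (x ^ 2 + y ^ 2)⁻¹ := by
  have h := (integrable_inv_one_add_sq.comp_div (R := y) hy.ne').const_mul (y ^ 2)⁻¹
  convert h using 2 with x
  field_simp
  ring

lemma integral_g {y : ℝ} (hy : 0 < y) : ∫ x : ℝ, (x ^ 2 + y ^ 2)⁻¹ = Real.pi / y := by
  have h1 : (fun x : ℝ => (x ^ 2 + y ^ 2)⁻¹)
      = fun x : ℝ => (y ^ 2)⁻¹ * (1 + (x / y) ^ 2)⁻¹ := by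
    funext x; field_simp; ring
  rw [h1, MeasureTheory.integral_const_mul,
    MeasureTheory.Measure.integral_comp_div (fun u : ℝ => (1 + u ^ 2)⁻¹) y,
    integral_univ_inv_one_add_sq, abs_of_pos hy, smul_eq_mul]
  field_simp


lemma arith_key {y W t a : ℝ} (h1 : 1 < y) (hW : y ≤ W) (ht : y < t)
    (ha : 0 ≤ a) (hat : a * t = 1) (hub : t ≤ 2 * W + 1 / (2 * W))
    (hlb : 2 * W - a ≤ t) :
    |a ^ 2 - (1 / 4) * (W ^ 2)⁻¹| ≤ (y ^ 2)⁻¹ * (W ^ 2)⁻¹ := by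
  have hy0 : 0 < y := by linarith
  have hW0 : 0 < W := by linarith
  have ht0 : 0 < t := by linarith
  have ha1 : a < 1 := by nlinarith
  have htW : W ≤ t := by nlinarith
  have haW : a * W ≤ 1 := by nlinarith
  have haW' : a ≤ 1 / W := by rw [le_div_iff₀ hW0]; exact haW
  have hlb2 : 2 * W - 1 / W ≤ t := by
    have : 1 / W ≥ a := haW'
    linarith
  have hWinv : W * (1 / W) = 1 := by field_simp
  have hee : 2 * W * (1 / (2 * W)) = 1 := by field_simp
  have he0 : (0:ℝ) ≤ 1 / (2 * W) := by positivity
  have he1 : 1 / (2 * W) ≤ 1 := by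
    rw [div_le_one (by linarith)]; linarith
  have hf0 : (0:ℝ) ≤ 1 / W := by positivity
  have hf1 : 1 / W ≤ 1 := by
    rw [div_le_one hW0]; linarith
  have habs : |4 * W ^ 2 - t ^ 2| ≤ 4 := by
    rw [abs_le]
    constructor
    · nlinarith [hee, hub, he0, he1,
        mul_le_mul_of_nonneg_left hub ht0.le,
        mul_le_mul_of_nonneg_right hub (by linarith : (0:ℝ) ≤ 2 * W + 1 / (2 * W))]
    · nlinarith [hWinv, hlb2, hf0, hf1,
        mul_le_mul_of_nonneg_left hlb2 (by linarith : (0:ℝ) ≤ 2 * W - 1 / W),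
        mul_le_mul_of_nonneg_right hlb2 ht0.le]
  have hat2 : a ^ 2 * t ^ 2 = 1 := by
    rw [← mul_pow, hat]; norm_num
  have hkey : a ^ 2 - (1 / 4) * (W ^ 2)⁻¹ = (4 * W ^ 2 - t ^ 2) / (4 * W ^ 2 * t ^ 2) := by
    field_simp
    linear_combination (4 * W ^ 2) * hat2
  rw [hkey, abs_div, abs_of_pos (by positivity : (0:ℝ) < 4 * W ^ 2 * t ^ 2)]
  have h2 : |4 * W ^ 2 - t ^ 2| / (4 * W ^ 2 * t ^ 2) ≤ 4 / (4 * W ^ 2 * t ^ 2) := by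
    gcongr
  calc |4 * W ^ 2 - t ^ 2| / (4 * W ^ 2 * t ^ 2) ≤ 4 / (4 * W ^ 2 * t ^ 2) := h2
    _ = (W ^ 2)⁻¹ * (t ^ 2)⁻¹ := by field_simp
    _ ≤ (y ^ 2)⁻¹ * (W ^ 2)⁻¹ := by
        rw [mul_comm]
        gcongr

lemma pointwise_bound (x y : ℝ) (hy : 1 < y) :
    |‖slitMap x (Complex.I * y) - Complex.I * y‖ ^ 2
      - (1 / 4) * (x ^ 2 + y ^ 2)⁻¹| ≤ (y ^ 2)⁻¹ * (x ^ 2 + y ^ 2)⁻¹ := by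
  have hy0 : 0 < y := lt_trans one_pos hy
  set w : ℂ := Complex.I * (y : ℂ) - (x : ℂ) with hwdef
  have hwre : w.re = -x := by simp [hwdef]
  have hwim : w.im = y := by simp [hwdef]
  have him : (w ^ 2 - 1).im = -(2 * x * y) := by
    rw [sq]
    simp [Complex.mul_im, hwre, hwim]
    ring
  have hre : (w ^ 2 - 1).re = x ^ 2 - y ^ 2 - 1 := by
    rw [sq]
    simp [Complex.mul_re, hwre, hwim]
    ring
  have hcond : (w ^ 2 - 1).im ≠ 0 ∨ (w ^ 2 - 1).re < 0 := by
    rcases eq_or_ne x 0 with hx | hx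
    · right; rw [hre, hx]; nlinarith
    · left; rw [him]; intro h
      have : x * y = 0 := by linarith
      rcases mul_eq_zero.mp this with h1 | h1
      · exact hx h1
      · exact absurd h1 hy0.ne'
  have hne : w ^ 2 - 1 ≠ 0 := by
    intro h
    rcases hcond with h1 | h1
    · rw [h] at h1; simp at h1
    · rw [h] at h1; simp at h1
  set s : ℂ := upperSqrt (w ^ 2 - 1) with hsdef
  have hs2 : s ^ 2 = w ^ 2 - 1 := upperSqrt_sq hne
  have hsim : 0 < s.im := im_upperSqrt_pos hcond
  have hWsq : ‖w‖ ^ 2 = x ^ 2 + y ^ 2 := by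
    rw [Complex.sq_norm, Complex.normSq_apply, hwre, hwim]; ring
  have hW : y ≤ ‖w‖ := by
    have := Complex.im_le_norm w; rwa [hwim] at this
  have hW0 : 0 < ‖w‖ := lt_of_lt_of_le hy0 hW
  have ht : y < ‖s + w‖ := by
    have h1 : (s + w).im = s.im + y := by simp [Complex.add_im, hwim]
    have h2 := Complex.im_le_norm (s + w)
    rw [h1] at h2; linarith
  have hat : ‖s - w‖ * ‖s + w‖ = 1 := by
    rw [← norm_mul]
    have h3 : (s - w) * (s + w) = -1 := by linear_combination hs2
    rw [h3]; simp
  have hsabs : ‖s‖ ≤ ‖w‖ + 1 / (2 * ‖w‖) := by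
    have h1 : ‖s‖ ^ 2 ≤ ‖w‖ ^ 2 + 1 := by
      calc ‖s‖ ^ 2 = ‖s ^ 2‖ := (norm_pow s 2).symm
        _ = ‖w ^ 2 - 1‖ := by rw [hs2]
        _ ≤ ‖w ^ 2‖ + ‖1‖ := norm_sub_le _ _
        _ = ‖w‖ ^ 2 + 1 := by rw [norm_pow]; simp
    have hee : 2 * ‖w‖ * (1 / (2 * ‖w‖)) = 1 := by field_simp
    refine le_of_sq_le_sq ?_ (by positivity)
    nlinarith [sq_nonneg (1 / (2 * ‖w‖))]
  have hub : ‖s + w‖ ≤ 2 * ‖w‖ + 1 / (2 * ‖w‖) := by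
    calc ‖s + w‖ ≤ ‖s‖ + ‖w‖ := norm_add_le _ _
      _ ≤ 2 * ‖w‖ + 1 / (2 * ‖w‖) := by linarith
  have hlb : 2 * ‖w‖ - ‖s - w‖ ≤ ‖s + w‖ := by
    have h1 : ‖2 * w‖ ≤ ‖s + w‖ + ‖s - w‖ := by
      have h2 : (2 : ℂ) * w = (s + w) - (s - w) := by ring
      rw [h2]
      exact norm_sub_le _ _
    rw [norm_mul] at h1
    simp only [Complex.norm_two] at h1
    linarith
  have hsm : slitMap x (Complex.I * y) - Complex.I * y = s - w := by
    simp only [slitMap, hsdef, hwdef]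
    ring
  rw [hsm, ← hWsq]
  exact arith_key hy hW ht (norm_nonneg _) hat hub hlb


theorem slitMap_integral_asymptotics :
    ∃ c > (0 : ℝ), ∃ ytil > (0 : ℝ), ∀ y : ℝ, ytil < y →
      |(∫ x : ℝ, ‖slitMap x (Complex.I * y) - Complex.I * y‖ ^ 2)
        - Real.pi / (4 * y)| < c / y ^ 3 := by
  refine ⟨2 * Real.pi, by positivity, 1, one_pos, fun y hy => ?_⟩
  have hy0 : 0 < y := lt_trans one_pos hy
  set f : ℝ → ℝ := fun x => (‖slitMap x (Complex.I * y) - Complex.I * y‖) ^ 2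
    with hfdef
  have hmeas : Measurable f := by
    have h1 : Measurable fun x : ℝ => slitMap x (Complex.I * y) - Complex.I * y := by
      unfold slitMap
      exact ((Complex.measurable_ofReal.add (measurable_upperSqrt.comp
        (((measurable_const.sub Complex.measurable_ofReal).pow_const 2).sub
          measurable_const))).sub measurable_const)
    have h2 : f = fun x => ‖slitMap x (Complex.I * y) - Complex.I * y‖ ^ 2 := by
      funext x; rw [hfdef]
    rw [h2]
    exact h1.norm.pow_const 2
  have hg := integrable_g hy0
  have hpb : ∀ x : ℝ, |f x - (1 / 4) * (x ^ 2 + y ^ 2)⁻¹|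
      ≤ (y ^ 2)⁻¹ * (x ^ 2 + y ^ 2)⁻¹ := fun x => pointwise_bound x y hy
  have hyinv : (y ^ 2)⁻¹ ≤ 1 := by
    rw [inv_le_one_iff₀]; right; nlinarith
  have hfg : Integrable f := by
    apply Integrable.mono' (hg.const_mul 2) hmeas.aestronglyMeasurable
    filter_upwards with x
    have h1 : (0 : ℝ) < x ^ 2 + y ^ 2 := by positivity
    have h2 := (abs_le.mp (hpb x)).2
    have h3 : (0 : ℝ) ≤ (x ^ 2 + y ^ 2)⁻¹ := by positivity
    have h4 : (y ^ 2)⁻¹ * (x ^ 2 + y ^ 2)⁻¹ ≤ (x ^ 2 + y ^ 2)⁻¹ := by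
      nlinarith
    rw [Real.norm_eq_abs, abs_of_nonneg (by rw [hfdef]; positivity)]
    linarith
  have h4 : Integrable (fun x : ℝ => (1 / 4) * (x ^ 2 + y ^ 2)⁻¹) := hg.const_mul _
  have hI4 : ∫ x : ℝ, (1 / 4) * (x ^ 2 + y ^ 2)⁻¹ = Real.pi / (4 * y) := by
    rw [MeasureTheory.integral_const_mul, integral_g hy0]; ring
  have hsplit : (∫ x : ℝ, f x) - Real.pi / (4 * y)
      = ∫ x : ℝ, (f x - (1 / 4) * (x ^ 2 + y ^ 2)⁻¹) := by
    rw [MeasureTheory.integral_sub hfg h4, hI4]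
  rw [hsplit]
  have hb1 : |∫ x : ℝ, (f x - (1 / 4) * (x ^ 2 + y ^ 2)⁻¹)|
      ≤ ∫ x : ℝ, |f x - (1 / 4) * (x ^ 2 + y ^ 2)⁻¹| := by
    have := MeasureTheory.norm_integral_le_integral_norm
      (μ := MeasureTheory.volume) (fun x : ℝ => f x - (1 / 4) * (x ^ 2 + y ^ 2)⁻¹)
    simpa [Real.norm_eq_abs] using this
  have hb2 : ∫ x : ℝ, |f x - (1 / 4) * (x ^ 2 + y ^ 2)⁻¹|
      ≤ ∫ x : ℝ, (y ^ 2)⁻¹ * (x ^ 2 + y ^ 2)⁻¹ := by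
    exact MeasureTheory.integral_mono (hfg.sub h4).abs (hg.const_mul _) hpb
  have hval : ∫ x : ℝ, (y ^ 2)⁻¹ * (x ^ 2 + y ^ 2)⁻¹ = Real.pi / y ^ 3 := by
    rw [MeasureTheory.integral_const_mul, integral_g hy0, div_eq_mul_inv,
      div_eq_mul_inv, ← mul_assoc, mul_comm ((y ^ 2)⁻¹) Real.pi, mul_assoc,
      ← mul_inv]
    norm_num [pow_succ]
  have hfin : Real.pi / y ^ 3 < 2 * Real.pi / y ^ 3 := by
    have h5 : (0 : ℝ) < Real.pi / y ^ 3 := by positivity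
    have h6 : 2 * Real.pi / y ^ 3 = Real.pi / y ^ 3 + Real.pi / y ^ 3 := by ring
    linarith
  calc |∫ x : ℝ, (f x - (1 / 4) * (x ^ 2 + y ^ 2)⁻¹)|
      ≤ ∫ x : ℝ, |f x - (1 / 4) * (x ^ 2 + y ^ 2)⁻¹| := hb1
    _ ≤ ∫ x : ℝ, (y ^ 2)⁻¹ * (x ^ 2 + y ^ 2)⁻¹ := hb2
    _ = Real.pi / y ^ 3 := hval
    _ < 2 * Real.pi / y ^ 3 := hfin
end

section
/- For every ζ ≥ 0 and every real x, Δ(ζ, x) ≤ Δ(ζ, 0) = √(ζ² + 1) − ζ, and moreover √(ζ² + 1) − ζ ≤ 1/(1 + ζ). -/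
/-- Vertical displacement of the point `iζ` under the slit map attached at `x`. -/
noncomputable def Δ (ζ x : ℝ) : ℝ := (slitMap x (Complex.I * ζ)).im - ζ

lemma upperSqrt_im_nonneg (w : ℂ) : 0 ≤ (upperSqrt w).im := by
  unfold upperSqrt
  split_ifs with h
  · exact h.le
  · simpa using le_of_not_gt h

lemma upperSqrt_im_sq (w : ℂ) :
    (upperSqrt w).im ^ 2 = (‖w‖ - w.re) / 2 := by
  by_cases hw : w = 0
  · simp [upperSqrt, hw, Complex.zero_cpow (by norm_num : (1/2 : ℂ) ≠ 0)]
  · set s := w ^ (1/2 : ℂ) with hs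
    have hsq : s ^ 2 = w := by
      rw [hs, show (1/2 : ℂ) = ((2:ℕ) : ℂ)⁻¹ by norm_num]
      exact Complex.cpow_nat_inv_pow w two_ne_zero
    have hre : w.re = s.re ^ 2 - s.im ^ 2 := by
      rw [← hsq, pow_two, Complex.mul_re]; ring
    have habs : ‖w‖ = s.re ^ 2 + s.im ^ 2 := by
      rw [← hsq, pow_two, norm_mul, ← pow_two, Complex.sq_norm, Complex.normSq_apply]
      ring
    have him : (upperSqrt w).im ^ 2 = s.im ^ 2 := by
      unfold upperSqrt
      split_ifs <;> rw [← hs] <;> simp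
    rw [him, hre, habs]; ring

lemma w_re (ζ x : ℝ) : ((Complex.I * ζ - x) ^ 2 - 1 : ℂ).re = x^2 - ζ^2 - 1 := by
  simp [pow_two, Complex.mul_re, Complex.mul_im]

lemma w_im (ζ x : ℝ) : ((Complex.I * ζ - x) ^ 2 - 1 : ℂ).im = -2*ζ*x := by
  simp [pow_two, Complex.mul_re, Complex.mul_im]
  ring

theorem delta_max_at_zero (ζ : ℝ) (hζ : 0 ≤ ζ) :
    (∀ x : ℝ, Δ ζ x ≤ Δ ζ 0) ∧
      Δ ζ 0 = Real.sqrt (ζ ^ 2 + 1) - ζ ∧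
      Real.sqrt (ζ ^ 2 + 1) - ζ ≤ 1 / (1 + ζ) := by
  have hΔ : ∀ x : ℝ, Δ ζ x = (upperSqrt ((Complex.I * ζ - x) ^ 2 - 1)).im - ζ := by
    intro x
    simp [Δ, slitMap]
  have habs : ∀ x : ℝ,
      ‖((Complex.I * ζ - x) ^ 2 - 1 : ℂ)‖ ≤ x^2 + ζ^2 + 1 := by
    intro x
    set w : ℂ := (Complex.I * ζ - x) ^ 2 - 1 with hwdef
    have hsqabs : ‖w‖ ^ 2 = w.re^2 + w.im^2 := by
      rw [Complex.sq_norm, Complex.normSq_apply]; ring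
    have h2 : ‖w‖ ^ 2 ≤ (x^2 + ζ^2 + 1)^2 := by
      rw [hsqabs, hwdef, w_re, w_im]
      nlinarith [sq_nonneg x, sq_nonneg ζ]
    calc ‖w‖ = Real.sqrt (‖w‖ ^ 2) :=
          (Real.sqrt_sq (norm_nonneg w)).symm
      _ ≤ Real.sqrt ((x^2 + ζ^2 + 1)^2) := Real.sqrt_le_sqrt h2
      _ = x^2 + ζ^2 + 1 := Real.sqrt_sq (by positivity)
  -- value at 0
  have h0sq : (upperSqrt ((Complex.I * ζ - (0:ℝ)) ^ 2 - 1)).im ^ 2 = ζ^2 + 1 := by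
    rw [upperSqrt_im_sq, w_re]
    have habs0 : ‖((Complex.I * ζ - (0:ℝ)) ^ 2 - 1 : ℂ)‖ = ζ^2 + 1 := by
      have hsqabs : ‖((Complex.I * ζ - (0:ℝ)) ^ 2 - 1 : ℂ)‖ ^ 2
          = (ζ^2+1)^2 := by
        rw [Complex.sq_norm, Complex.normSq_apply]
        have := w_re ζ 0
        have := w_im ζ 0
        nlinarith
      calc ‖((Complex.I * ζ - (0:ℝ)) ^ 2 - 1 : ℂ)‖
          = Real.sqrt (‖((Complex.I * ζ - (0:ℝ)) ^ 2 - 1 : ℂ)‖ ^ 2) :=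
            (Real.sqrt_sq (norm_nonneg _)).symm
        _ = Real.sqrt ((ζ^2+1)^2) := by rw [hsqabs]
        _ = ζ^2 + 1 := Real.sqrt_sq (by positivity)
    rw [habs0]; ring
  have hΔ0 : Δ ζ 0 = Real.sqrt (ζ ^ 2 + 1) - ζ := by
    rw [hΔ 0]
    congr 1
    rw [← h0sq, Real.sqrt_sq (upperSqrt_im_nonneg _)]
  refine ⟨?_, hΔ0, ?_⟩
  · intro x
    rw [hΔ x, hΔ0]
    have hsq : (upperSqrt ((Complex.I * ζ - x) ^ 2 - 1)).im ^ 2 ≤ ζ^2 + 1 := by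
      rw [upperSqrt_im_sq, w_re]
      have := habs x
      nlinarith
    have : (upperSqrt ((Complex.I * ζ - x) ^ 2 - 1)).im ≤ Real.sqrt (ζ^2+1) :=
      (Real.le_sqrt (upperSqrt_im_nonneg _) (by positivity)).mpr hsq
    linarith
  · have hs := Real.sq_sqrt (by positivity : (0:ℝ) ≤ ζ^2+1)
    have hs0 := Real.sqrt_nonneg (ζ^2+1)
    have h1 : (1:ℝ) ≤ Real.sqrt (ζ^2+1) := by nlinarith
    have hζs : ζ ≤ Real.sqrt (ζ^2+1) := by nlinarith
    have hpos : (0:ℝ) < 1 + ζ := by linarith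
    rw [le_div_iff₀ hpos]
    nlinarith [mul_nonneg (by linarith : (0:ℝ) ≤ Real.sqrt (ζ^2+1) - 1)
      (by linarith : (0:ℝ) ≤ Real.sqrt (ζ^2+1) - ζ)]
end
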